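/- Let r ∈ (0,1) and let (x_n) be a complex sequence. If (E_{n≤N}^{Bin(r)}(x_n))_{N∈ℕ} is bounded, then the sequence of averages of the shifted sequence, (E_{n≤N}^{Bin(r)}((T^k x)_n))_{N∈ℕ}, is uniformly bounded in both N and k by sup_N |E_{n≤N}^{Bin(r)}(x_n)| together with the finitely many initial values; in particular there is a constant C with |E_{n≤N}^{Bin(r)}((T^k x)_n)| ≤ C for all N, k ∈ ℕ. -/

import Mathlib

open Finset Filter

noncomputable def binAvg (r : ℝ) (N : ℕ) (x : ℕ → ℂ) : ℂ :=
  ∑ n ∈ Finset.range (N + 1), (N.choose n : ℂ) * (r : ℂ) ^ n * ((1 : ℂ) - r) ^ (N - n) * x n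

def shiftOp (x : ℕ → ℂ) : ℕ → ℂ := fun n => if n = 0 then 0 else x (n - 1)

lemma binAvg_shift_rec (r : ℝ) (x : ℕ → ℂ) (N : ℕ) :
    binAvg r (N+1) (shiftOp x) = r * binAvg r N x + (1 - r) * binAvg r N (shiftOp x) := by
  have aux1 : binAvg r (N+1) (shiftOp x)
      = ∑ i ∈ Finset.range (N+1),
          ((N.choose i : ℂ) + (N.choose (i+1) : ℂ)) * (r:ℂ)^(i+1) * ((1:ℂ)-r)^(N-i) * x i := by
    unfold binAvg
    rw [Finset.sum_range_succ']
    have h0 : shiftOp x 0 = 0 := rfl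
    rw [h0, mul_zero, add_zero]
    apply Finset.sum_congr rfl
    intro i _
    have hs : shiftOp x (i+1) = x i := rfl
    rw [hs, Nat.succ_sub_succ, Nat.choose_succ_succ]
    push_cast
    ring
  have aux2 : binAvg r N (shiftOp x)
      = ∑ i ∈ Finset.range N, (N.choose (i+1) : ℂ) * (r:ℂ)^(i+1) * ((1:ℂ)-r)^(N-(i+1)) * x i := by
    unfold binAvg
    cases N with
    | zero => simp [shiftOp]
    | succ M =>
      rw [Finset.sum_range_succ']
      have h0 : shiftOp x 0 = 0 := rfl
      rw [h0, mul_zero, add_zero]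
      apply Finset.sum_congr rfl
      intro i _
      rfl
  rw [aux1, aux2]
  have expand : ∀ i ∈ Finset.range (N+1),
      ((N.choose i : ℂ) + (N.choose (i+1) : ℂ)) * (r:ℂ)^(i+1) * ((1:ℂ)-r)^(N-i) * x i
      = (r:ℂ) * ((N.choose i : ℂ) * (r:ℂ)^i * ((1:ℂ)-r)^(N-i) * x i)
        + (N.choose (i+1) : ℂ) * (r:ℂ)^(i+1) * ((1:ℂ)-r)^(N-i) * x i := by
    intro i _
    ring
  rw [Finset.sum_congr rfl expand, Finset.sum_add_distrib, ← Finset.mul_sum]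
  unfold binAvg
  congr 1
  rw [Finset.sum_range_succ, Nat.choose_succ_self, Nat.cast_zero, zero_mul, zero_mul,
    zero_mul, add_zero, Finset.mul_sum]
  apply Finset.sum_congr rfl
  intro i hi
  have hNi : N - (i+1) + 1 = N - i := by
    have := Finset.mem_range.mp hi; omega
  rw [← hNi, pow_succ]
  ring

theorem stmt_17 (r : ℝ) (hr : r ∈ Set.Ioo (0:ℝ) 1) (x : ℕ → ℂ)
    (h : ∃ C₀, ∀ N, ‖binAvg r N x‖ ≤ C₀) :
    ∃ C, ∀ N k : ℕ, ‖binAvg r N (shiftOp^[k] x)‖ ≤ C := by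
  obtain ⟨C₀, hC₀⟩ := h
  refine ⟨max C₀ 0, ?_⟩
  have hC : 0 ≤ max C₀ 0 := le_max_right _ _
  have step : ∀ y : ℕ → ℂ, (∀ N, ‖binAvg r N y‖ ≤ max C₀ 0) →
      ∀ N, ‖binAvg r N (shiftOp y)‖ ≤ max C₀ 0 := by
    intro y hy N
    induction N with
    | zero =>
      simp [binAvg, shiftOp]
    | succ N ih =>
      rw [binAvg_shift_rec]
      have h1 : ‖(r:ℂ)‖ = r := by
        rw [Complex.norm_real, Real.norm_eq_abs, abs_of_pos hr.1]
      have h2 : ‖((1:ℂ) - r)‖ = 1 - r := by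
        rw [show ((1:ℂ) - r) = ((1 - r : ℝ) : ℂ) by push_cast; ring,
          Complex.norm_real, Real.norm_eq_abs, abs_of_pos (by linarith [hr.2])]
      calc ‖(r:ℂ) * binAvg r N y + ((1:ℂ) - r) * binAvg r N (shiftOp y)‖
          ≤ ‖(r:ℂ) * binAvg r N y‖ + ‖((1:ℂ) - r) * binAvg r N (shiftOp y)‖ := norm_add_le _ _
        _ ≤ r * max C₀ 0 + (1 - r) * max C₀ 0 := by
            rw [norm_mul, norm_mul, h1, h2]
            exact add_le_add (mul_le_mul_of_nonneg_left (hy N) hr.1.le)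
              (mul_le_mul_of_nonneg_left ih (by linarith [hr.2]))
        _ = max C₀ 0 := by ring
  intro N k
  induction k generalizing N with
  | zero => exact le_trans (hC₀ N) (le_max_left _ _)
  | succ k ih =>
    rw [Function.iterate_succ', Function.comp_apply]
    exact step _ ih N
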